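/- The universal Novikov field Λ over ℚ is a field: every nonzero element Σ a(ρ) q^ρ has a multiplicative inverse in Λ. -/

import Mathlib

/-- The defining finiteness property of elements of the universal Novikov field. -/
def NovikovCondition (a : ℝ → ℚ) : Prop :=
  ∀ ε : ℝ, {ρ : ℝ | ρ < ε ∧ a ρ ≠ 0}.Finite

/-- Convolution product on formal sums `Σ a(ρ) q^ρ`, given by
`q^{ρ₁} q^{ρ₂} = q^{ρ₁+ρ₂}` extended bilinearly. -/
noncomputable def novikovMul (a b : ℝ → ℚ) : ℝ → ℚ :=
  fun ρ : ℝ => ∑ᶠ ρ₁ : ℝ, a ρ₁ * b (ρ - ρ₁)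

/-- The multiplicative unit `q^0`: the function supported at `0` with value `1`. -/
noncomputable def novikovOne : ℝ → ℚ := fun ρ : ℝ => if ρ = 0 then 1 else 0

lemma novikov_isPWO {a : ℝ → ℚ} (ha : NovikovCondition a) :
    (Function.support a).IsPWO := by
  apply Set.IsWF.isPWO
  rw [Set.isWF_iff_no_descending_seq]
  intro f hf hmem
  have hfin : {ρ : ℝ | ρ < f 0 + 1 ∧ a ρ ≠ 0}.Finite := ha _
  refine (Set.infinite_of_injective_forall_mem (f := f) hf.injective ?_) hfin
  intro n
  exact ⟨lt_of_le_of_lt (hf.antitone (Nat.zero_le n)) (lt_add_one _), hmem n⟩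

lemma novikovMul_eq_mul_coeff (A B : HahnSeries ℝ ℚ) (ρ : ℝ) :
    novikovMul A.coeff B.coeff ρ = (A * B).coeff ρ := by
  classical
  rw [HahnSeries.coeff_mul]
  have hsub : Function.support (fun ρ₁ => A.coeff ρ₁ * B.coeff (ρ - ρ₁)) ⊆
      ↑((Finset.antidiagonal A.isPWO_support B.isPWO_support ρ).image Prod.fst) := by
    intro ρ₁ h
    simp only [Function.mem_support, ne_eq] at h
    have h1 : A.coeff ρ₁ ≠ 0 := fun h' => h (by rw [h', zero_mul])
    have h2 : B.coeff (ρ - ρ₁) ≠ 0 := fun h' => h (by rw [h', mul_zero])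
    simp only [Finset.coe_image, Set.mem_image]
    exact ⟨(ρ₁, ρ - ρ₁), Finset.mem_addAntidiagonal.2 ⟨h1, h2, by ring⟩, rfl⟩
  rw [novikovMul, finsum_eq_sum_of_support_subset _ hsub]
  have hinj : Set.InjOn Prod.fst
      ((Finset.antidiagonal A.isPWO_support B.isPWO_support ρ : Finset (ℝ × ℝ)) :
        Set (ℝ × ℝ)) := by
    intro x hx y hy hxy
    rw [Finset.mem_coe, Finset.mem_addAntidiagonal] at hx hy
    have : x.2 = y.2 := by
      have h1 := hx.2.2; have h2 := hy.2.2
      rw [← hxy] at h2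
      linarith
    exact Prod.ext hxy this
  rw [Finset.sum_image (fun x hx y hy h => hinj hx hy h)]
  refine Finset.sum_congr rfl fun ij hij => ?_
  rw [Finset.mem_addAntidiagonal] at hij
  have : ρ - ij.1 = ij.2 := by linarith [hij.2.2]
  rw [this]

lemma novikov_inv {A B : HahnSeries ℝ ℚ} (hA : NovikovCondition A.coeff)
    (hAB : A * B = 1) : NovikovCondition B.coeff := by
  classical
  have hA0 : A ≠ 0 := left_ne_zero_of_mul_eq_one hAB
  have hB0 : B ≠ 0 := right_ne_zero_of_mul_eq_one hAB
  set v := A.order with hv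
  have horder : B.order = -v := by
    have := HahnSeries.order_mul hA0 hB0
    rw [hAB, HahnSeries.order_one] at this
    linarith
  -- coefficients of B below -v vanish
  have fact0 : ∀ τ : ℝ, τ < -v → B.coeff τ = 0 := by
    intro τ hτ
    exact HahnSeries.coeff_eq_zero_of_lt_order (by rw [horder]; exact hτ)
  have hAv : A.coeff v ≠ 0 := HahnSeries.coeff_order_eq_zero.not.mpr hA0
  -- recursion fact
  have fact1 : ∀ τ : ℝ, -v < τ → B.coeff τ ≠ 0 →
      ∃ δ : ℝ, A.coeff δ ≠ 0 ∧ v < δ ∧ B.coeff (v + τ - δ) ≠ 0 := by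
    intro τ hτ hBτ
    by_contra h
    push_neg at h
    have hzero : (A * B).coeff (v + τ) = 0 := by
      rw [hAB, HahnSeries.coeff_one, if_neg (by linarith)]
    rw [HahnSeries.coeff_mul] at hzero
    have hsum : ∑ ij ∈ Finset.antidiagonal A.isPWO_support B.isPWO_support (v + τ),
        A.coeff ij.1 * B.coeff ij.2 = A.coeff v * B.coeff τ := by
      refine Finset.sum_eq_single (v, τ) ?_ ?_
      · intro ij hij hne
        rw [Finset.mem_addAntidiagonal] at hij
        have h1 : v ≤ ij.1 := HahnSeries.order_le_of_coeff_ne_zero hij.1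
        rcases eq_or_lt_of_le h1 with heq | hlt
        · exfalso
          apply hne
          have h2 : ij.2 = τ := by
            have := hij.2.2; rw [← heq] at this; linarith
          exact Prod.ext heq.symm h2
        · have h2 : ij.2 = v + τ - ij.1 := by
            have := hij.2.2; linarith
          rw [h2, h ij.1 hij.1 hlt, mul_zero]
      · intro hnot
        exfalso
        exact hnot (Finset.mem_addAntidiagonal.2 ⟨hAv, hBτ, rfl⟩)
    rw [hsum] at hzero
    exact mul_ne_zero hAv hBτ hzero
  -- two cases on whether A has support above its order
  by_cases hD : ∃ δ' : ℝ, A.coeff δ' ≠ 0 ∧ v < δ'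
  · obtain ⟨δ', hδ'ne, hδ'gt⟩ := hD
    -- minimum of the support of A strictly above v
    have hfinD : {δ : ℝ | δ < δ' + 1 ∧ A.coeff δ ≠ 0 ∧ v < δ}.Finite :=
      (hA (δ' + 1)).subset (fun δ hδ => ⟨hδ.1, hδ.2.1⟩)
    obtain ⟨δ₀, hδ₀mem, hδ₀min⟩ := Set.exists_min_image _ id hfinD
      ⟨δ', ⟨lt_add_one _, hδ'ne, hδ'gt⟩⟩
    have hδ₀ : ∀ δ : ℝ, A.coeff δ ≠ 0 → v < δ → δ₀ ≤ δ := by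
      intro δ hne hgt
      rcases lt_or_ge δ (δ' + 1) with hlt | hle
      · exact hδ₀min δ ⟨hlt, hne, hgt⟩
      · have := hδ₀min δ' ⟨lt_add_one _, hδ'ne, hδ'gt⟩
        simp only [id] at this ⊢
        linarith
    set d₀ := δ₀ - v with hd₀
    have hd₀pos : 0 < d₀ := by
      have := hδ₀mem.2.2; simp only [hd₀]; linarith
    -- induction
    have key : ∀ n : ℕ, {ρ : ℝ | ρ < -v + n * d₀ ∧ B.coeff ρ ≠ 0}.Finite := by
      intro n
      induction n with
      | zero =>
        refine Set.Finite.subset (Set.finite_empty) ?_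
        intro ρ hρ
        simp only [Nat.cast_zero, zero_mul, add_zero] at hρ
        exact absurd (fact0 ρ hρ.1) hρ.2
      | succ n ih =>
        have hDn : {δ : ℝ | δ < v + (n + 1 : ℕ) * d₀ ∧ A.coeff δ ≠ 0}.Finite := hA _
        refine Set.Finite.subset
          (Set.Finite.insert (-v) (Set.Finite.image2 (fun σ δ => σ + (δ - v)) ih hDn)) ?_
        intro τ hτ
        obtain ⟨hτlt, hτne⟩ := hτ
        rcases eq_or_ne τ (-v) with heq | hne
        · exact Set.mem_insert_iff.2 (Or.inl heq)
        · have hτgt : -v < τ := by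
            rcases lt_trichotomy τ (-v) with h | h | h
            · exact absurd (fact0 τ h) hτne
            · exact absurd h hne
            · exact h
          obtain ⟨δ, hδne, hδgt, hBσ⟩ := fact1 τ hτgt hτne
          set σ := v + τ - δ with hσ
          have hσgev : -v ≤ σ := by
            by_contra hlt
            push_neg at hlt
            exact hBσ (fact0 σ hlt)
          have hδ₀le : δ₀ ≤ δ := hδ₀ δ hδne hδgt
          refine Set.mem_insert_iff.2 (Or.inr ?_)
          refine Set.mem_image2.2 ⟨σ, ?_, δ, ?_, by simp only [hσ]; ring⟩
          · constructor
            · push_cast at hτlt ⊢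
              simp only [hσ, hd₀] at *
              linarith
            · exact hBσ
          · constructor
            · push_cast at hτlt ⊢
              linarith
            · exact hδne
    -- conclude
    intro ε
    obtain ⟨n, hn⟩ := exists_nat_ge ((ε + v) / d₀)
    refine (key n).subset ?_
    intro ρ hρ
    refine ⟨?_, hρ.2⟩
    have : (ε + v) / d₀ * d₀ ≤ n * d₀ := by
      apply mul_le_mul_of_nonneg_right hn (le_of_lt hd₀pos)
    rw [div_mul_cancel₀ _ (ne_of_gt hd₀pos)] at this
    have := hρ.1
    linarith
  · -- A is a monomial: B supported at -v only
    push_neg at hD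
    intro ε
    refine (Set.finite_singleton (-v)).subset ?_
    intro τ hτ
    rcases lt_trichotomy τ (-v) with h | h | h
    · exact absurd (fact0 τ h) hτ.2
    · exact h
    · obtain ⟨δ, hδne, hδgt, _⟩ := fact1 τ h hτ.2
      exact absurd (hD δ hδne) (not_le.2 hδgt)

/-- The universal Novikov field `Λ` over `ℚ` is a field: every
nonzero element has a multiplicative inverse in `Λ`. -/
theorem stmt2 (a : ℝ → ℚ) (ha : NovikovCondition a) (hne : a ≠ 0) :
    ∃ b : ℝ → ℚ, NovikovCondition b ∧ novikovMul a b = novikovOne := by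
  set A : HahnSeries ℝ ℚ := ⟨a, novikov_isPWO ha⟩ with hA
  have hA0 : A ≠ 0 := by
    intro h
    apply hne
    have : A.coeff = (0 : HahnSeries ℝ ℚ).coeff := by rw [h]
    simpa [hA, HahnSeries.coeff_zero'] using this
  have hAB : A * A⁻¹ = 1 := mul_inv_cancel₀ hA0
  refine ⟨(A⁻¹).coeff, novikov_inv (by simpa [hA] using ha) hAB, ?_⟩
  funext ρ
  have : a = A.coeff := rfl
  rw [this, novikovMul_eq_mul_coeff A A⁻¹ ρ, hAB, HahnSeries.coeff_one]
  rfl
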